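/- arXiv:1105.1610 — 3 statements merged into one kernel-verified Lean document; each statement's English description precedes it below -/
import Mathlib

section
/- For every prime p and all integers 1 ≤ k ≤ n, one has the product formula α_n(k) = β_k(k)^{p^{n−k}} · (β_{k+1}(k)·β_{k+1}(k+1))^{p^{n−k−1}} · (β_{k+2}(k)·β_{k+2}(k+1)·β_{k+2}(k+2))^{p^{n−k−2}} · ⋯ · (β_n(k)·β_n(k+1)⋯β_n(n)); that is, α_n(k) = Π_{m=k}^{n} ( Π_{ν=k}^{m} β_m(ν) )^{p^{n−m}}. -/
private lemma perm_orderOf_le {p : ℕ} (hp : p.Prime) {n : ℕ} (σ : Equiv.Perm (Fin (p ^ n)))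
    (h : ∃ a, orderOf σ = p ^ a) : orderOf σ ≤ p ^ n := by
  obtain ⟨a, ha⟩ := h
  have hdvd : orderOf σ ∣ p ^ n := by
    rw [← Equiv.Perm.lcm_cycleType]
    refine Multiset.lcm_dvd.mpr ?_
    intro l hl
    have h1 : l ∣ p ^ a := by
      rw [← ha, ← Equiv.Perm.lcm_cycleType]; exact Multiset.dvd_lcm hl
    obtain ⟨b, hb, rfl⟩ := (Nat.dvd_prime_pow hp).mp h1
    have h2 : p ^ b ≤ p ^ n :=
      (Equiv.Perm.le_card_support_of_mem_cycleType hl).trans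
        (by simpa using Finset.card_le_univ σ.support)
    exact pow_dvd_pow _ ((Nat.pow_le_pow_iff_right hp.one_lt).mp h2)
  exact Nat.le_of_dvd (pow_pos hp.pos n) hdvd

/-- `hcc p n k` is the number of conjugacy classes of a Sylow `p`-subgroup of the
symmetric group on `p ^ n` letters that consist of elements of order at most `p ^ k`
(with `hcc p n k = 0` for `k < 0`). All Sylow `p`-subgroups are conjugate, so this
count does not depend on the choice of Sylow subgroup. -/
noncomputable def hcc (p n : ℕ) (k : ℤ) : ℕ :=
  if hp : p.Prime ∧ 0 ≤ k then
    haveI : Fact p.Prime := ⟨hp.1⟩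
    Nat.card {c : ConjClasses
        (↥((Classical.arbitrary (Sylow p (Equiv.Perm (Fin (p ^ n))))) :
          Subgroup (Equiv.Perm (Fin (p ^ n))))) //
      ∃ g, ConjClasses.mk g = c ∧ orderOf g ≤ p ^ k.toNat}
  else 0

private lemma hcc_pos {p : ℕ} (hp : p.Prime) (m : ℕ) {k : ℤ} (hk : 0 ≤ k) :
    0 < hcc p m k := by
  haveI : Fact p.Prime := ⟨hp⟩
  rw [hcc, dif_pos ⟨hp, hk⟩]
  have : Nonempty {c : ConjClasses
      (↥((Classical.arbitrary (Sylow p (Equiv.Perm (Fin (p ^ m))))) :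
        Subgroup (Equiv.Perm (Fin (p ^ m))))) //
      ∃ g, ConjClasses.mk g = c ∧ orderOf g ≤ p ^ k.toNat} :=
    ⟨⟨ConjClasses.mk 1, 1, rfl, by simpa using Nat.one_le_pow _ _ hp.pos⟩⟩
  exact Nat.card_pos

private lemma hcc_stable {p : ℕ} (hp : p.Prime) (m : ℕ) {j : ℤ} (hj : (m : ℤ) ≤ j) :
    hcc p m j = hcc p m (m : ℤ) := by
  haveI : Fact p.Prime := ⟨hp⟩
  have h0 : (0 : ℤ) ≤ (m : ℤ) := Int.ofNat_nonneg m
  have key : ∀ g : ↥((Classical.arbitrary (Sylow p (Equiv.Perm (Fin (p ^ m))))) :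
      Subgroup (Equiv.Perm (Fin (p ^ m)))), orderOf g ≤ p ^ m := by
    intro g
    obtain ⟨a, ha⟩ := IsPGroup.iff_orderOf.mp
      (Classical.arbitrary (Sylow p (Equiv.Perm (Fin (p ^ m))))).isPGroup' g
    rw [← Subgroup.orderOf_coe] at ha ⊢
    exact perm_orderOf_le hp _ ⟨a, ha⟩
  rw [hcc, dif_pos ⟨hp, h0.trans hj⟩, hcc, dif_pos ⟨hp, h0⟩]
  apply Nat.card_congr
  apply Equiv.subtypeEquivRight
  intro c
  constructor
  · rintro ⟨g, rfl, -⟩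
    exact ⟨g, rfl, by simpa using key g⟩
  · rintro ⟨g, rfl, -⟩
    refine ⟨g, rfl, (key g).trans (Nat.pow_le_pow_right hp.pos ?_)⟩
    omega

/-- `beta p n k = (h_n(k-1)/h_n(k)) * (h_{n-1}(k)/h_{n-1}(k-1))^p`, as a real number. -/
noncomputable def beta (p n : ℕ) (k : ℤ) : ℝ :=
  ((hcc p n (k - 1) : ℝ) / hcc p n k) *
    ((hcc p (n - 1) k : ℝ) / hcc p (n - 1) (k - 1)) ^ p

private lemma hcc_ne {p : ℕ} (hp : p.Prime) (m : ℕ) {k : ℤ} (hk : 0 ≤ k) :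
    (hcc p m k : ℝ) ≠ 0 :=
  Nat.cast_ne_zero.mpr (hcc_pos hp m hk).ne'

private lemma inner_prod {p : ℕ} (hp : p.Prime) (k m : ℕ) (hk : 1 ≤ k) :
    ∀ j : ℕ, k ≤ j →
    ∏ ν ∈ Finset.Icc k j, beta p m (ν : ℤ) =
      ((hcc p m ((k : ℤ) - 1) : ℝ) / hcc p m (j : ℤ)) *
        ((hcc p (m - 1) (j : ℤ) : ℝ) / hcc p (m - 1) ((k : ℤ) - 1)) ^ p := by
  intro j hj
  induction j, hj using Nat.le_induction with
  | base => simp [beta]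
  | succ j hj ih =>
    rw [Finset.prod_Icc_succ_top (by omega), ih, beta]
    have e1 : ((j : ℤ) + 1 - 1) = (j : ℤ) := by ring
    have hk1 : (0 : ℤ) ≤ (k : ℤ) - 1 := by omega
    have h1 := hcc_ne hp m (Int.ofNat_nonneg j)
    have h2 := hcc_ne hp m (k := (j : ℤ) + 1) (by positivity)
    have h3 := hcc_ne hp (m - 1) (Int.ofNat_nonneg j)
    have h4 := hcc_ne hp (m - 1) hk1
    push_cast
    rw [e1]
    ring_nf at h1 h2 h3 h4 ⊢
    have h3' := pow_ne_zero p h3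
    have h4' := pow_ne_zero p h4
    simp only [div_pow, inv_pow]
    field_simp

/-- Product formula: `α_n(k) = ∏_{m=k}^{n} (∏_{ν=k}^{m} β_m(ν))^{p^{n−m}}`,
where `α_n(k) = h_n(k−1)/h_n(n)`. -/
theorem alpha_eq_prod_beta (p : ℕ) (hp : p.Prime) (k n : ℕ) (hk : 1 ≤ k) (hkn : k ≤ n) :
    (hcc p n ((k : ℤ) - 1) : ℝ) / hcc p n n =
      ∏ m ∈ Finset.Icc k n,
        (∏ ν ∈ Finset.Icc k m, beta p m (ν : ℤ)) ^ (p ^ (n - m)) := by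
  have hk1 : (0 : ℤ) ≤ (k : ℤ) - 1 := by omega
  induction n, hkn using Nat.le_induction with
  | base =>
    rw [Finset.Icc_self, Finset.prod_singleton, Nat.sub_self, pow_zero, pow_one,
      inner_prod hp k k hk k le_rfl]
    have e1 : hcc p (k - 1) (k : ℤ) = hcc p (k - 1) ((k : ℤ) - 1) := by
      rw [hcc_stable hp (k - 1) (by omega)]
      congr 1
      omega
    rw [e1, div_self (hcc_ne hp (k - 1) hk1), one_pow, mul_one]
  | succ n hn ih =>
    rw [Finset.prod_Icc_succ_top (by omega)]
    have e2 : ∀ m ∈ Finset.Icc k n,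
        (∏ ν ∈ Finset.Icc k m, beta p m (ν : ℤ)) ^ (p ^ (n + 1 - m)) =
          ((∏ ν ∈ Finset.Icc k m, beta p m (ν : ℤ)) ^ (p ^ (n - m))) ^ p := by
      intro m hm
      have hmn : m ≤ n := (Finset.mem_Icc.mp hm).2
      have e : n + 1 - m = n - m + 1 := by omega
      rw [← pow_mul, ← pow_succ, e]
    rw [Finset.prod_congr rfl e2, Finset.prod_pow, ← ih,
      Nat.sub_self, pow_zero, pow_one, inner_prod hp k (n + 1) hk (n + 1) (by omega)]
    have e4 : n + 1 - 1 = n := by omega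
    have e3 : hcc p (n + 1 - 1) (((n + 1 : ℕ) : ℤ)) = hcc p n (n : ℤ) := by
      rw [e4, hcc_stable hp n (by push_cast; omega)]
    have h1 := hcc_ne hp n (Int.ofNat_nonneg n)
    have h2 := hcc_ne hp n hk1
    have h3 := hcc_ne hp (n + 1) (k := ((n : ℕ) + 1 : ℕ)) (Int.ofNat_nonneg _)
    rw [e3, e4]
    push_cast at h3 ⊢
    ring_nf at h1 h2 h3 ⊢
    have h1' := pow_ne_zero p h1
    have h2' := pow_ne_zero p h2
    simp only [div_pow, inv_pow]
    field_simp
end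

section
/- Let p = 2. There exists a constant C > 0 such that for all n ≥ 2, one has h_n(n) − h_n(n−2) ≤ C · h_{n−1}(n−1); consequently h_n(n−2)/h_n(n) → 1 as n → ∞. -/
namespace STW

/-- swap-or-not -/
def tau {G : Type} (s : Bool) (q : G × G) : G × G := if s then q.swap else q

@[simp] lemma tau_false {G : Type} (q : G × G) : tau false q = q := rfl
@[simp] lemma tau_true {G : Type} (q : G × G) : tau true q = q.swap := rfl

lemma tau_tau {G : Type} (s t : Bool) (q : G × G) : tau s (tau t q) = tau (xor s t) q := by
  cases s <;> cases t <;> simp [tau]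

lemma tau_mul {G : Type} [Group G] (s : Bool) (q r : G × G) :
    tau s (q * r) = tau s q * tau s r := by
  cases s <;> rfl

lemma tau_inv {G : Type} [Group G] (s : Bool) (q : G × G) :
    tau s q⁻¹ = (tau s q)⁻¹ := by cases s <;> rfl

/-- Wreath product `G ≀ C2`, concretely. -/
@[ext] structure WP (G : Type) : Type where
  p : G × G
  s : Bool

namespace WP

variable {G : Type} [Group G]

instance : Group (WP G) where
  mul x y := ⟨x.p * tau x.s y.p, xor x.s y.s⟩
  one := ⟨1, false⟩
  inv x := ⟨tau x.s x.p⁻¹, x.s⟩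
  mul_assoc x y z := by
    cases x with | mk xp xs =>
    cases y with | mk yp ys =>
    cases z with | mk zp zs =>
    refine WP.ext ?_ (by show xor (xor xs ys) zs = xor xs (xor ys zs); simp [Bool.xor_assoc])
    show (xp * tau xs yp) * tau (xor xs ys) zp = xp * tau xs (yp * tau ys zp)
    rw [tau_mul, tau_tau, mul_assoc]
  one_mul x := by
    cases x
    refine WP.ext ?_ (by show xor false _ = _; simp)
    show 1 * tau false _ = _; simp
  mul_one x := by
    cases x with | mk xp xs =>
    refine WP.ext ?_ (by show xor xs false = xs; simp)
    show xp * tau xs 1 = xp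
    cases xs <;> simp [tau]
  inv_mul_cancel x := by
    cases x with | mk xp xs =>
    refine WP.ext ?_ (by show xor xs xs = false; simp)
    show tau xs xp⁻¹ * tau xs xp = 1
    rw [← tau_mul, inv_mul_cancel]
    cases xs <;> rfl

lemma mul_def (x y : WP G) : x * y = ⟨x.p * tau x.s y.p, xor x.s y.s⟩ := rfl
lemma one_def : (1 : WP G) = ⟨1, false⟩ := rfl
lemma inv_def (x : WP G) : x⁻¹ = ⟨tau x.s x.p⁻¹, x.s⟩ := rfl

@[simp] lemma mul_p (x y : WP G) : (x * y).p = x.p * tau x.s y.p := rfl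
@[simp] lemma mul_s (x y : WP G) : (x * y).s = xor x.s y.s := rfl
@[simp] lemma one_p : (1 : WP G).p = 1 := rfl
@[simp] lemma one_s : (1 : WP G).s = false := rfl

/-- inclusion of the base group -/
def incl : (G × G) →* WP G where
  toFun q := ⟨q, false⟩
  map_one' := rfl
  map_mul' q r := by refine WP.ext ?_ (by simp); show q * r = q * tau false r; simp

lemma incl_injective : Function.Injective (incl (G := G)) := by
  intro a b h
  simpa [incl] using congrArg WP.p h

@[simp] lemma orderOf_base (q : G × G) : orderOf (⟨q, false⟩ : WP G) = orderOf q :=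
  orderOf_injective incl incl_injective q

end WP

end STW
namespace STW

namespace WP

variable {G : Type} [Group G]

instance [Finite G] : Finite (WP G) := by
  have : Function.Injective (fun x : WP G => (x.p, x.s)) := by
    intro a b h
    exact WP.ext (congrArg Prod.fst h) (congrArg Prod.snd h)
  exact Finite.of_injective _ this

/-- explicit type equivalence -/
def typeEquiv : WP G ≃ (G × G) × Bool where
  toFun x := (x.p, x.s)
  invFun y := ⟨y.1, y.2⟩
  left_inv x := rfl
  right_inv y := rfl

lemma card_wp [Finite G] : Nat.card (WP G) = 2 * (Nat.card G) ^ 2 := by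
  rw [Nat.card_congr (typeEquiv (G := G))]
  simp [Nat.card_prod]
  ring

@[simp] lemma base_pow (q : G × G) (m : ℕ) : (⟨q, false⟩ : WP G) ^ m = ⟨q ^ m, false⟩ := by
  induction m with
  | zero => rw [pow_zero, pow_zero]; rfl
  | succ m ih =>
    rw [pow_succ, pow_succ, ih, mul_def]
    exact WP.ext (by simp) (by simp)

lemma tw_sq (q : G × G) : (⟨q, true⟩ : WP G) ^ 2 = ⟨(q.1 * q.2, q.2 * q.1), false⟩ := by
  rw [pow_two, mul_def]
  exact WP.ext (by cases q; simp [Prod.ext_iff, mul_def]) (by simp)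

lemma tw_pow_even (q : G × G) (m : ℕ) :
    (⟨q, true⟩ : WP G) ^ (2 * m) = ⟨((q.1 * q.2) ^ m, (q.2 * q.1) ^ m), false⟩ := by
  rw [pow_mul, tw_sq, base_pow]
  exact WP.ext (by simp [Prod.pow_def]) rfl

lemma s_pow (x : WP G) (m : ℕ) : (x ^ m).s = (x.s && (m % 2 == 1)) := by
  induction m with
  | zero => simp [one_def]
  | succ m ih =>
    rw [pow_succ, mul_s, ih]
    rcases Nat.even_or_odd m with h | h
    · have h2 : m % 2 = 0 := Nat.even_iff.mp h
      have h3 : (m+1) % 2 = 1 := by omega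
      cases hx : x.s <;> simp [h2, h3]
    · have h2 : m % 2 = 1 := Nat.odd_iff.mp h
      have h3 : (m+1) % 2 = 0 := by omega
      cases hx : x.s <;> simp [h2, h3]

lemma orderOf_tw (q : G × G) : orderOf (⟨q, true⟩ : WP G) = 2 * orderOf (q.1 * q.2) := by
  have hconj : IsConj (q.1 * q.2) (q.2 * q.1) :=
    isConj_iff.mpr ⟨q.1⁻¹, by group⟩
  have horder : orderOf (q.2 * q.1) = orderOf (q.1 * q.2) := by
    obtain ⟨u, hu⟩ := hconj
    exact (SemiconjBy.orderOf_eq (u : G) hu).symm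
  apply Nat.dvd_antisymm
  · apply orderOf_dvd_of_pow_eq_one
    rw [tw_pow_even]
    refine WP.ext ?_ rfl
    simp [Prod.ext_iff, pow_orderOf_eq_one,
      (orderOf_dvd_iff_pow_eq_one).mp (dvd_of_eq horder)]
  · -- 2 * orderOf (q.1*q.2) ∣ orderOf ⟨q,true⟩
    have hne : orderOf (⟨q, true⟩ : WP G) ≠ 0 ∨ True := Or.inr trivial
    -- first: orderOf is even
    set N := orderOf (⟨q, true⟩ : WP G) with hN
    have hsN : ((⟨q, true⟩ : WP G) ^ N).s = false := by
      rw [pow_orderOf_eq_one]; rfl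
    rw [s_pow] at hsN
    have hNeven : ¬ (N % 2 = 1) := by
      intro hmod
      rw [hmod] at hsN
      simp at hsN
    obtain ⟨m, hm2⟩ : ∃ m, N = 2 * m := ⟨N / 2, by omega⟩
    have hpow : (⟨q, true⟩ : WP G) ^ N = 1 := pow_orderOf_eq_one _
    rw [hm2, tw_pow_even] at hpow
    have h1 : (q.1 * q.2) ^ m = 1 := by
      have hp' := congrArg WP.p hpow
      rw [one_p] at hp'
      exact (Prod.ext_iff.mp hp').1
    have : orderOf (q.1 * q.2) ∣ m := orderOf_dvd_of_pow_eq_one h1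
    rw [hm2]
    exact Nat.mul_dvd_mul_left 2 this

end WP

end STW
namespace STW
namespace WP

variable {G : Type} [Group G]

@[simp] lemma inv_s (x : WP G) : (x⁻¹).s = x.s := rfl
@[simp] lemma inv_p (x : WP G) : (x⁻¹).p = tau x.s x.p⁻¹ := rfl

lemma isConj_of_eq_conj (u x y : WP G) (h : u * x * u⁻¹ = y) : IsConj x y :=
  isConj_iff.mpr ⟨u, h⟩

lemma conj_swap_base (a b : G) :
    IsConj (⟨(a, b), false⟩ : WP G) ⟨(b, a), false⟩ := by
  apply isConj_of_eq_conj ⟨1, true⟩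
  refine WP.ext ?_ (by simp)
  show (1 * tau true (a, b)) * tau (xor true false) (tau true (1 : G × G)⁻¹) = (b, a)
  simp [tau]

lemma conj_base_of {a a' b b' : G} (h1 : IsConj a a') (h2 : IsConj b b') :
    IsConj (⟨(a, b), false⟩ : WP G) ⟨(a', b'), false⟩ := by
  obtain ⟨x, hx⟩ := isConj_iff.mp h1
  obtain ⟨y, hy⟩ := isConj_iff.mp h2
  apply isConj_of_eq_conj ⟨(x, y), false⟩
  refine WP.ext ?_ (by simp)
  show ((x, y) * tau false (a, b)) * tau (xor false false) (tau false ((x, y) : G × G)⁻¹)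
      = (a', b')
  simp only [tau_false, Bool.xor_false]
  rw [← hx, ← hy]
  simp [Prod.ext_iff, mul_assoc]

lemma conj_tw_norm (a b : G) :
    IsConj (⟨(a, b), true⟩ : WP G) ⟨(a * b, 1), true⟩ := by
  apply isConj_of_eq_conj ⟨(1, b⁻¹), false⟩
  refine WP.ext ?_ (by simp)
  show ((1, b⁻¹) * tau false (a, b)) * tau (xor false true) (tau false ((1, b⁻¹) : G × G)⁻¹)
      = (a * b, 1)
  simp [tau, Prod.ext_iff]

lemma conj_tw_norm' {c a b : G} (h : IsConj (a * b) c) :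
    IsConj (⟨(a, b), true⟩ : WP G) ⟨(c, 1), true⟩ := by
  refine (conj_tw_norm a b).trans ?_
  obtain ⟨x, hx⟩ := isConj_iff.mp h
  apply isConj_of_eq_conj ⟨(x, x), false⟩
  refine WP.ext ?_ (by simp)
  show ((x, x) * tau false (a * b, 1)) * tau (xor false true) (tau false ((x, x) : G × G)⁻¹)
      = (c, 1)
  simp [tau, Prod.ext_iff, ← hx, mul_assoc]

lemma s_of_isConj {x y : WP G} (h : IsConj x y) : x.s = y.s := by
  obtain ⟨u, hu⟩ := h
  have := congrArg WP.s hu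
  simp only [mul_s] at this
  cases hx : x.s <;> cases hy : y.s <;> cases hu' : ((u : WP G)).s <;> simp_all

lemma base_conj_classify {a b c d : G}
    (h : IsConj (⟨(a, b), false⟩ : WP G) ⟨(c, d), false⟩) :
    (IsConj a c ∧ IsConj b d) ∨ (IsConj a d ∧ IsConj b c) := by
  obtain ⟨u, hu⟩ := h
  have hp := congrArg WP.p hu
  simp only [mul_p] at hp
  set v := (u : WP G) with hv
  cases hs : v.s
  · left
    rw [hs] at hp
    simp only [tau_false] at hp
    have h1 : v.p.1 * a = c * v.p.1 := congrArg Prod.fst hp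
    have h2 : v.p.2 * b = d * v.p.2 := congrArg Prod.snd hp
    constructor
    · exact isConj_iff.mpr ⟨v.p.1, by rw [h1]; group⟩
    · exact isConj_iff.mpr ⟨v.p.2, by rw [h2]; group⟩
  · right
    rw [hs] at hp
    simp only [tau_true] at hp
    have h1 : v.p.1 * b = c * v.p.1 := congrArg Prod.fst hp
    have h2 : v.p.2 * a = d * v.p.2 := congrArg Prod.snd hp
    constructor
    · exact isConj_iff.mpr ⟨v.p.2, by rw [h2]; group⟩
    · exact isConj_iff.mpr ⟨v.p.1, by rw [h1]; group⟩

end WP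
end STW
namespace STW

/-- the tower of iterated wreath products -/
def W : ℕ → Type
  | 0 => PUnit
  | n + 1 => WP (W n)

instance groupW : (n : ℕ) → Group (W n)
  | 0 => inferInstanceAs (Group PUnit)
  | n + 1 => @WP.instGroup (W n) (groupW n)

instance subsingletonW0 : Subsingleton (W 0) := inferInstanceAs (Subsingleton PUnit.{1})

instance finiteW : (n : ℕ) → Finite (W n)
  | 0 => inferInstanceAs (Finite PUnit.{1})
  | n + 1 => letI := finiteW n; inferInstanceAs (Finite (WP (W n)))

lemma exp_W : ∀ (n : ℕ) (x : W n), x ^ (2 ^ n) = 1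
  | 0, x => Subsingleton.elim _ _
  | n + 1, x => by
    revert x
    show ∀ x : WP (W n), x ^ (2 ^ (n + 1)) = (1 : WP (W n))
    intro x
    have h2 : 2 ^ (n + 1) = 2 * 2 ^ n := by ring
    cases x with | mk q s =>
    cases s
    · rw [WP.base_pow]
      have h1 : q.1 ^ 2 ^ (n + 1) = 1 := by rw [h2, mul_comm, pow_mul, exp_W n q.1, one_pow]
      have h1' : q.2 ^ 2 ^ (n + 1) = 1 := by rw [h2, mul_comm, pow_mul, exp_W n q.2, one_pow]
      have hq : q ^ (2 ^ (n + 1)) = 1 := by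
        rw [Prod.pow_def, h1, h1']; rfl
      rw [hq]; rfl
    · rw [h2, WP.tw_pow_even, exp_W n, exp_W n]
      rfl

lemma orderOf_dvd_W (n : ℕ) (x : W n) : orderOf x ∣ 2 ^ n :=
  orderOf_dvd_of_pow_eq_one (exp_W n x)

/-- a canonical element of maximal order `2 ^ n` -/
def topW : (n : ℕ) → W n
  | 0 => PUnit.unit
  | n + 1 => (⟨(topW n, 1), true⟩ : WP (W n))

lemma orderOf_topW : ∀ n, orderOf (topW n) = 2 ^ n
  | 0 => by
    have : (topW 0) = (1 : W 0) := Subsingleton.elim _ _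
    rw [this, orderOf_one]; rfl
  | n + 1 => by
    show orderOf (⟨(topW n, 1), true⟩ : WP (W n)) = 2 ^ (n + 1)
    rw [WP.orderOf_tw]
    show 2 * orderOf (topW n * 1) = 2 ^ (n + 1)
    rw [mul_one, orderOf_topW n]; ring

/-- key uniqueness: any two elements of maximal order are conjugate -/
lemma conj_of_max_order : ∀ (n : ℕ) (x y : W n),
    orderOf x = 2 ^ n → orderOf y = 2 ^ n → IsConj x y
  | 0, x, y, _, _ => by rw [Subsingleton.elim x y]
  | n + 1, x, y, hx, hy => by
    have hbase : ∀ z : WP (W n), orderOf z = 2 ^ (n + 1) → z.s = true := by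
      intro z hz
      cases z with | mk q s =>
      cases s
      · exfalso
        have : orderOf (⟨q, false⟩ : WP (W n)) ∣ 2 ^ n := by
          rw [WP.orderOf_base]
          apply orderOf_dvd_of_pow_eq_one
          rw [Prod.pow_def, exp_W n, exp_W n]; rfl
        rw [hz] at this
        have := Nat.le_of_dvd (by positivity) this
        have h2 : (2:ℕ) ^ n < 2 ^ (n + 1) := by
          apply Nat.pow_lt_pow_right <;> omega
        omega
      · rfl
    have hxs := hbase x hx
    have hys := hbase y hy
    revert x y
    show ∀ x y : WP (W n), orderOf x = 2 ^ (n + 1) → orderOf y = 2 ^ (n + 1) → x.s = true → y.s = true → IsConj x y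
    intro x y hx hy hxs hys
    cases x with | mk q s =>
    cases y with | mk r t =>
    simp only at hxs hys
    subst hxs hys
    rw [WP.orderOf_tw] at hx hy
    have hq : orderOf (q.1 * q.2) = 2 ^ n := by
      have : (2:ℕ) ^ (n+1) = 2 * 2 ^ n := by ring
      omega
    have hr : orderOf (r.1 * r.2) = 2 ^ n := by
      have : (2:ℕ) ^ (n+1) = 2 * 2 ^ n := by ring
      omega
    have hc : IsConj (q.1 * q.2) (r.1 * r.2) := conj_of_max_order n _ _ hq hr
    exact (WP.conj_tw_norm' hc).trans (WP.conj_tw_norm r.1 r.2).symm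

end STW
namespace STW

open ConjClasses

/-- order is constant on conjugacy classes -/
lemma orderOf_eq_of_mk_eq {H : Type} [Group H] {g h : H}
    (hgh : ConjClasses.mk g = ConjClasses.mk h) : orderOf g = orderOf h := by
  obtain ⟨u, hu⟩ := ConjClasses.mk_eq_mk_iff_isConj.mp hgh
  exact SemiconjBy.orderOf_eq (u : H) hu

lemma mk_out_eq {H : Type} [Group H] (c : ConjClasses H) :
    ConjClasses.mk (Quotient.out c) = c := by
  rw [← ConjClasses.quotient_mk_eq_mk]; exact Quotient.out_eq c

lemma isConj_out_self {H : Type} [Group H] (g : H) :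
    IsConj ((Quotient.out (ConjClasses.mk g))) g := by
  rw [← ConjClasses.mk_eq_mk_iff_isConj, mk_out_eq]

/-- number of conjugacy classes with representative of order at most `K` -/
noncomputable def cnt (H : Type) [Group H] (K : ℕ) : ℕ :=
  Nat.card {c : ConjClasses H // ∃ g, ConjClasses.mk g = c ∧ orderOf g ≤ K}

noncomputable def kcl (H : Type) [Group H] : ℕ := Nat.card (ConjClasses H)

lemma cnt_eq_kcl {H : Type} [Group H] {K : ℕ} (h : ∀ x : H, orderOf x ≤ K) :
    cnt H K = kcl H := by
  unfold cnt kcl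
  rw [Nat.card_congr (Equiv.subtypeUnivEquiv ?_)]
  intro c
  obtain ⟨g, hg⟩ := ConjClasses.exists_rep c
  exact ⟨g, hg, h g⟩

lemma cnt_mono {H : Type} [Group H] [Finite H] {K L : ℕ} (h : K ≤ L) : cnt H K ≤ cnt H L := by
  unfold cnt
  apply Nat.card_le_card_of_injective
    (fun c => (⟨c.1, by obtain ⟨g, h1, h2⟩ := c.2; exact ⟨g, h1, h2.trans h⟩⟩ :
      {c : ConjClasses H // ∃ g, ConjClasses.mk g = c ∧ orderOf g ≤ L}))
  intro a b hab
  have := congrArg Subtype.val hab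
  simp only at this
  exact Subtype.ext this

lemma cnt_add_compl {H : Type} [Group H] [Finite H] (K : ℕ) :
    cnt H K + Nat.card {c : ConjClasses H // ∃ g, ConjClasses.mk g = c ∧ K < orderOf g}
      = kcl H := by
  classical
  unfold cnt kcl
  have hcompl : ∀ c : ConjClasses H,
      (¬ ∃ g, ConjClasses.mk g = c ∧ orderOf g ≤ K) ↔
        (∃ g, ConjClasses.mk g = c ∧ K < orderOf g) := by
    intro c
    obtain ⟨g, hg⟩ := ConjClasses.exists_rep c
    constructor
    · intro h
      refine ⟨g, hg, ?_⟩
      by_contra hK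
      exact h ⟨g, hg, by omega⟩
    · rintro ⟨g', hg', hK⟩ ⟨g'', hg'', hK'⟩
      have := orderOf_eq_of_mk_eq (hg'.trans hg''.symm)
      omega
  have := Nat.card_sum (α := {c : ConjClasses H // ∃ g, ConjClasses.mk g = c ∧ orderOf g ≤ K})
    (β := {c : ConjClasses H // ¬ ∃ g, ConjClasses.mk g = c ∧ orderOf g ≤ K})
  rw [← Nat.card_congr (Equiv.sumCompl (fun c : ConjClasses H =>
    ∃ g, ConjClasses.mk g = c ∧ orderOf g ≤ K)), this]
  congr 1
  exact Nat.card_congr (Equiv.subtypeEquivRight (fun c => (hcompl c).symm))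

end STW
namespace STW

open ConjClasses

lemma lcm_pow2 (i j : ℕ) : Nat.lcm (2 ^ i) (2 ^ j) = 2 ^ max i j := by
  rcases le_total i j with h | h
  · rw [max_eq_right h]
    exact Nat.dvd_antisymm (Nat.lcm_dvd (pow_dvd_pow 2 h) dvd_rfl) (Nat.dvd_lcm_right _ _)
  · rw [max_eq_left h]
    exact Nat.dvd_antisymm (Nat.lcm_dvd dvd_rfl (pow_dvd_pow 2 h)) (Nat.dvd_lcm_left _ _)

/-- the key upper bound: classes of large order in `W (m+1) = WP (W m)` are at most
`2 * kcl (W m)` -/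
lemma big_bound (m : ℕ) (hm : 1 ≤ m) :
    Nat.card {c : ConjClasses (WP (W m)) //
      ∃ g, ConjClasses.mk g = c ∧ 2 ^ (m - 1) < orderOf g} ≤ 2 * kcl (W m) := by
  classical
  set H := WP (W m)
  set ψ : ConjClasses (W m) ⊕ ConjClasses (W m) → ConjClasses H :=
    fun z => match z with
    | .inl d => ConjClasses.mk (⟨(Quotient.out d, 1), true⟩ : WP (W m))
    | .inr d => ConjClasses.mk (⟨(topW m, Quotient.out d), false⟩ : WP (W m))
    with hψ
  have hsurj : ∀ c : {c : ConjClasses H //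
      ∃ g, ConjClasses.mk g = c ∧ 2 ^ (m - 1) < orderOf g}, ∃ z, ψ z = c.1 := by
    rintro ⟨c, g, hgc, hord⟩
    cases g with | mk q s =>
    cases s
    · -- base element of large order
      have hordp : 2 ^ (m - 1) < Nat.lcm (orderOf q.1) (orderOf q.2) := by
        rw [WP.orderOf_base, Prod.orderOf] at hord
        exact hord
      obtain ⟨i, hi, hqi⟩ := (Nat.dvd_prime_pow Nat.prime_two).mp (orderOf_dvd_W m q.1)
      obtain ⟨j, hj, hqj⟩ := (Nat.dvd_prime_pow Nat.prime_two).mp (orderOf_dvd_W m q.2)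
      rw [hqi, hqj, lcm_pow2] at hordp
      have hmax : max i j = m := by
        have := (Nat.pow_lt_pow_iff_right (by norm_num : 1 < 2)).mp hordp
        omega
      rcases max_cases i j with ⟨hij, _⟩ | ⟨hij, _⟩
      · -- i = m : first coordinate has maximal order
        have h1 : IsConj q.1 (topW m) :=
          conj_of_max_order m _ _ (by rw [hqi, ← hij, hmax]) (orderOf_topW m)
        have h2 : IsConj q.2 (Quotient.out (ConjClasses.mk q.2)) :=
          (isConj_out_self q.2).symm
        refine ⟨Sum.inr (ConjClasses.mk q.2), ?_⟩
        show ConjClasses.mk (⟨(topW m, _), false⟩ : WP (W m)) = c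
        rw [← hgc, ConjClasses.mk_eq_mk_iff_isConj]
        exact (WP.conj_base_of h1 h2).symm
      · -- j = m : swap first
        have h1 : IsConj q.2 (topW m) :=
          conj_of_max_order m _ _ (by rw [hqj, ← hij, hmax]) (orderOf_topW m)
        have h2 : IsConj q.1 (Quotient.out (ConjClasses.mk q.1)) :=
          (isConj_out_self q.1).symm
        refine ⟨Sum.inr (ConjClasses.mk q.1), ?_⟩
        show ConjClasses.mk (⟨(topW m, _), false⟩ : WP (W m)) = c
        rw [← hgc, ConjClasses.mk_eq_mk_iff_isConj]
        exact ((WP.conj_swap_base q.1 q.2).trans (WP.conj_base_of h1 h2)).symm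
    · -- twisted element
      refine ⟨Sum.inl (ConjClasses.mk (q.1 * q.2)), ?_⟩
      show ConjClasses.mk (⟨(Quotient.out (ConjClasses.mk (q.1 * q.2)), 1), true⟩ : WP (W m)) = c
      rw [← hgc, ConjClasses.mk_eq_mk_iff_isConj]
      exact (WP.conj_tw_norm' ((isConj_out_self (q.1 * q.2)).symm)).symm
  have hinj : Function.Injective
      (fun c : {c : ConjClasses H // ∃ g, ConjClasses.mk g = c ∧ 2 ^ (m - 1) < orderOf g} =>
        (hsurj c).choose) := by
    intro a b hab
    apply Subtype.ext
    have ha := (hsurj a).choose_spec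
    have hb := (hsurj b).choose_spec
    rw [← ha, ← hb]
    exact congrArg ψ hab
  calc Nat.card {c : ConjClasses H // ∃ g, ConjClasses.mk g = c ∧ 2 ^ (m - 1) < orderOf g}
      ≤ Nat.card (ConjClasses (W m) ⊕ ConjClasses (W m)) :=
        Nat.card_le_card_of_injective _ hinj
    _ = 2 * kcl (W m) := by rw [Nat.card_sum]; unfold kcl; ring

/-- lower bound for the number of conjugacy classes -/
lemma kcl_lb (n : ℕ) : n + 1 ≤ kcl (W n) := by
  classical
  have hmap : ∀ i : Fin (n + 1), orderOf (topW n ^ (2 ^ (n - (i : ℕ)))) = 2 ^ (i : ℕ) := by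
    intro i
    rw [orderOf_pow, orderOf_topW, Nat.gcd_eq_right (pow_dvd_pow 2 (by omega)),
      Nat.pow_div (by omega) (by norm_num)]
    congr 1
    omega
  have hinj : Function.Injective
      (fun i : Fin (n + 1) => ConjClasses.mk (topW n ^ (2 ^ (n - (i : ℕ))))) := by
    intro a b hab
    have := orderOf_eq_of_mk_eq hab
    rw [hmap a, hmap b] at this
    have := Nat.pow_right_injective (le_refl 2) this
    exact Fin.ext this
  have := Nat.card_le_card_of_injective _ hinj
  simpa [kcl] using this

/-- quadratic growth of class numbers -/
lemma kcl_sq (m : ℕ) : kcl (W m) * (kcl (W m) + 1) ≤ 2 * kcl (WP (W m)) := by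
  classical
  set f : Sym2 (ConjClasses (W m)) → ConjClasses (WP (W m)) :=
    Sym2.lift ⟨fun c d => ConjClasses.mk (⟨(Quotient.out c, Quotient.out d), false⟩ : WP (W m)),
      fun c d => by
        rw [ConjClasses.mk_eq_mk_iff_isConj]
        exact WP.conj_swap_base _ _⟩ with hf
  have hinj : Function.Injective f := by
    intro s t hst
    induction s with
    | _ a b =>
    induction t with
    | _ c d =>
    rw [hf] at hst
    simp only [Sym2.lift_mk] at hst
    rw [ConjClasses.mk_eq_mk_iff_isConj] at hst
    rcases WP.base_conj_classify hst with ⟨h1, h2⟩ | ⟨h1, h2⟩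
    · rw [← ConjClasses.mk_eq_mk_iff_isConj] at h1 h2
      rw [mk_out_eq, mk_out_eq] at h1 h2
      rw [Sym2.eq_iff]
      exact Or.inl ⟨h1, h2⟩
    · rw [← ConjClasses.mk_eq_mk_iff_isConj] at h1 h2
      rw [mk_out_eq, mk_out_eq] at h1 h2
      rw [Sym2.eq_iff]
      exact Or.inr ⟨h1, h2⟩
  have hcard := Nat.card_le_card_of_injective _ hinj
  have hsym : Nat.card (Sym2 (ConjClasses (W m))) = (kcl (W m) + 1).choose 2 := by
    letI : Fintype (ConjClasses (W m)) := Fintype.ofFinite _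
    rw [Nat.card_eq_fintype_card, Sym2.card, kcl, Nat.card_eq_fintype_card]
  rw [hsym] at hcard
  have hch : (kcl (W m) + 1).choose 2 = (kcl (W m) + 1) * kcl (W m) / 2 := by
    rw [Nat.choose_two_right]
    simp
  have heven : 2 ∣ (kcl (W m) + 1) * kcl (W m) := by
    rcases Nat.even_or_odd (kcl (W m)) with h | h
    · exact Dvd.dvd.mul_left (even_iff_two_dvd.mp h) _
    · exact Dvd.dvd.mul_right (even_iff_two_dvd.mp (by simpa using h.add_one)) _
  rw [hch] at hcard
  have hcard' : (kcl (W m) + 1) * kcl (W m) / 2 ≤ kcl (WP (W m)) := hcard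
  have hmul : (kcl (W m) + 1) * kcl (W m) = kcl (W m) * (kcl (W m) + 1) := by ring
  rw [hmul] at hcard' heven
  omega

end STW
namespace STW

open Equiv

/-- the flip permutation on `Bool × X` -/
def tauPerm {X : Type} (s : Bool) : Equiv.Perm (Bool × X) where
  toFun y := (xor s y.1, y.2)
  invFun y := (xor s y.1, y.2)
  left_inv y := by cases s <;> simp
  right_inv y := by cases s <;> simp

def pairIdx {G : Type} (p : G × G) (b : Bool) : G := cond b p.2 p.1

/-- the base permutation on `Bool × X` -/
def betaPerm {G X : Type} [Group G] (f : G →* Equiv.Perm X) (p : G × G) :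
    Equiv.Perm (Bool × X) :=
  Equiv.prodShear (Equiv.refl Bool) (fun b => f (pairIdx p b))

@[simp] lemma tauPerm_apply {X : Type} (s : Bool) (y : Bool × X) :
    tauPerm s y = (xor s y.1, y.2) := rfl

lemma tauPerm_tauPerm {X : Type} (s : Bool) (y : Bool × X) :
    tauPerm s (tauPerm s y) = y := by cases s <;> cases y <;> simp [tauPerm_apply]

@[simp] lemma betaPerm_apply {G X : Type} [Group G] (f : G →* Equiv.Perm X) (p : G × G)
    (y : Bool × X) : betaPerm f p y = (y.1, f (pairIdx p y.1) y.2) := rfl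

/-- the permutation representation of `WP G` on `Bool × X` -/
def wpPerm {G X : Type} [Group G] (f : G →* Equiv.Perm X) : WP G →* Equiv.Perm (Bool × X) where
  toFun x := betaPerm f x.p * tauPerm x.s
  map_one' := by
    ext y
    · show (betaPerm f (1 : WP G).p (tauPerm (1 : WP G).s y)).1 = y.1
      simp [WP.one_def]
    · show (betaPerm f (1 : WP G).p (tauPerm (1 : WP G).s y)).2 = y.2
      cases hy : y.1 <;> simp [WP.one_def, pairIdx, hy]
  map_mul' x z := by
    ext y
    · show (betaPerm f (x * z).p (tauPerm (x * z).s y)).1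
        = (betaPerm f x.p (tauPerm x.s (betaPerm f z.p (tauPerm z.s y)))).1
      cases hx : x.s <;> cases hz : z.s <;> simp [hx, hz]
    · show (betaPerm f (x * z).p (tauPerm (x * z).s y)).2
        = (betaPerm f x.p (tauPerm x.s (betaPerm f z.p (tauPerm z.s y)))).2
      cases hx : x.s <;> cases hz : z.s <;> cases hy : y.1 <;>
        simp [hx, hz, hy, pairIdx, tau, map_mul]

lemma wpPerm_injective {G X : Type} [Group G] (f : G →* Equiv.Perm X) [Nonempty X]
    (hf : Function.Injective f) : Function.Injective (wpPerm (X := X) f) := by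
  intro x z h
  have happ : ∀ y : Bool × X, betaPerm f x.p (tauPerm x.s y) = betaPerm f z.p (tauPerm z.s y) := by
    intro y
    have := congrArg (fun (σ : Equiv.Perm (Bool × X)) => σ y) h
    simpa [wpPerm] using this
  obtain ⟨v⟩ := ‹Nonempty X›
  have hs : x.s = z.s := by
    have := congrArg Prod.fst (happ (false, v))
    simp at this
    cases hx : x.s <;> cases hz : z.s <;> simp_all
  have hp : x.p = z.p := by
    rw [hs] at happ
    have hbeta : ∀ w, betaPerm f x.p w = betaPerm f z.p w := by
      intro w
      have := happ (tauPerm z.s w)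
      rwa [tauPerm_tauPerm] at this
    have h2 : ∀ b, pairIdx x.p b = pairIdx z.p b := by
      intro b
      apply hf
      ext v'
      have := congrArg Prod.snd (hbeta (b, v'))
      simpa using this
    exact Prod.ext (h2 false) (h2 true)
  exact WP.ext hp hs

/-- mul-equiv of permutation groups from a type equiv -/
def permMulEquiv {X Y : Type} (e : X ≃ Y) : Equiv.Perm X ≃* Equiv.Perm Y where
  toEquiv := e.permCongr
  map_mul' p q := by
    ext y
    simp [Equiv.permCongr_apply]

def fin2Equiv (n : ℕ) : (Bool × Fin (2 ^ n)) ≃ Fin (2 ^ (n + 1)) :=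
  ((Equiv.prodCongr finTwoEquiv.symm (Equiv.refl (Fin (2 ^ n)))).trans
    finProdFinEquiv).trans (finCongr (by ring))

/-- the tower of permutation representations -/
noncomputable def permW : (n : ℕ) → W n →* Equiv.Perm (Fin (2 ^ n))
  | 0 => 1
  | n + 1 =>
    ((permMulEquiv (fin2Equiv n)).toMonoidHom.comp (wpPerm (permW n)) : WP (W n) →* _)

lemma permW_injective : ∀ n, Function.Injective (permW n)
  | 0 => by
    intro x y _
    exact Subsingleton.elim x y
  | n + 1 => by
    show Function.Injective
      (((permMulEquiv (fin2Equiv n)).toMonoidHom.comp (wpPerm (permW n))))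
    rw [MonoidHom.coe_comp]
    exact Function.Injective.comp (permMulEquiv (fin2Equiv n)).injective
      (wpPerm_injective _ (permW_injective n))

lemma card_W : ∀ n, Nat.card (W n) = 2 ^ (2 ^ n - 1)
  | 0 => by
    rw [Nat.card_eq_one_iff_unique.mpr ⟨⟨fun a b => Subsingleton.elim a b⟩, ⟨topW 0⟩⟩]
    rfl
  | n + 1 => by
    have h1 : (1:ℕ) ≤ 2 ^ n := Nat.one_le_two_pow
    show Nat.card (WP (W n)) = 2 ^ (2 ^ (n + 1) - 1)
    rw [WP.card_wp, card_W n, ← pow_mul, ← pow_succ']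
    congr 1
    have : 2 ^ (n+1) = 2 * 2 ^ n := by ring
    omega

lemma sum_digits_two_pow (n : ℕ) : (Nat.digits 2 (2 ^ n)).sum = 1 := by
  induction n with
  | zero =>
    rw [pow_zero, Nat.digits_def' (by norm_num : 1 < 2) one_pos]
    norm_num
  | succ n ih =>
    have hpos : 0 < 2 ^ (n + 1) := by positivity
    rw [Nat.digits_def' (by norm_num : 1 < 2) hpos]
    have h1 : 2 ^ (n + 1) % 2 = 0 := by
      simp [Nat.pow_succ, Nat.mul_mod_left]
    have h2 : 2 ^ (n + 1) / 2 = 2 ^ n := by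
      rw [pow_succ]
      exact Nat.mul_div_cancel _ (by norm_num)
    rw [h1, h2, List.sum_cons, ih]

lemma factorization_fact_two_pow (n : ℕ) :
    (Nat.factorial (2 ^ n)).factorization 2 = 2 ^ n - 1 := by
  haveI : Fact (Nat.Prime 2) := ⟨Nat.prime_two⟩
  rw [Nat.factorization_def _ Nat.prime_two]
  have := sub_one_mul_padicValNat_factorial (p := 2) (2 ^ n)
  rw [sum_digits_two_pow] at this
  omega

instance sylowFinite {G : Type*} [Group G] [Finite G] {p : ℕ} : Finite (Sylow p G) :=
  Finite.of_injective (fun P => (P : Subgroup G)) (fun _ _ h => Sylow.ext h)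

/-- the image of `W n` is a Sylow 2-subgroup of the symmetric group -/
noncomputable def sylowW (n : ℕ) : Sylow 2 (Equiv.Perm (Fin (2 ^ n))) := by
  haveI : Fact (Nat.Prime 2) := ⟨Nat.prime_two⟩
  refine Sylow.ofCard (permW n).range ?_
  have h1 : Nat.card (permW n).range = Nat.card (W n) :=
    (Nat.card_congr (MulEquiv.toEquiv (MonoidHom.ofInjective (permW_injective n)))).symm
  have h2 : Nat.card (Equiv.Perm (Fin (2 ^ n))) = Nat.factorial (2 ^ n) := by
    rw [Nat.card_eq_fintype_card, Fintype.card_perm, Fintype.card_fin]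
  rw [h1, card_W, h2, factorization_fact_two_pow]

lemma sylowW_coe (n : ℕ) : ((sylowW n) : Subgroup (Equiv.Perm (Fin (2 ^ n)))) =
    (permW n).range := rfl

end STW
namespace STW

/-- conjugacy classes transported along a group isomorphism -/
def conjClassesEquiv {G H : Type*} [Group G] [Group H] (e : G ≃* H) :
    ConjClasses G ≃ ConjClasses H where
  toFun := ConjClasses.map e.toMonoidHom
  invFun := ConjClasses.map e.symm.toMonoidHom
  left_inv c := by
    obtain ⟨g, rfl⟩ := ConjClasses.exists_rep c
    show ConjClasses.mk (e.symm (e g)) = ConjClasses.mk g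
    rw [MulEquiv.symm_apply_apply]
  right_inv c := by
    obtain ⟨g, rfl⟩ := ConjClasses.exists_rep c
    show ConjClasses.mk (e (e.symm g)) = ConjClasses.mk g
    rw [MulEquiv.apply_symm_apply]

lemma conjClassesEquiv_mk {G H : Type*} [Group G] [Group H] (e : G ≃* H) (g : G) :
    conjClassesEquiv e (ConjClasses.mk g) = ConjClasses.mk (e g) := rfl

lemma cnt_iso {G H : Type} [Group G] [Group H] (e : G ≃* H) (K : ℕ) :
    cnt G K = cnt H K := by
  unfold cnt
  apply Nat.card_congr
  refine Equiv.subtypeEquiv (conjClassesEquiv e) ?_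
  intro c
  constructor
  · rintro ⟨g, rfl, hor⟩
    exact ⟨e g, (conjClassesEquiv_mk e g).symm,
      by rwa [show orderOf (e g) = orderOf g from orderOf_injective e.toMonoidHom e.injective g]⟩
  · rintro ⟨h, hmk, hor⟩
    refine ⟨e.symm h, ?_, by rwa [show orderOf (e.symm h) = orderOf h from orderOf_injective e.symm.toMonoidHom e.symm.injective h]⟩
    apply (conjClassesEquiv e).injective
    rw [conjClassesEquiv_mk, MulEquiv.apply_symm_apply, hmk]

lemma kcl_iso {G H : Type} [Group G] [Group H] (e : G ≃* H) : kcl G = kcl H :=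
  Nat.card_congr (conjClassesEquiv e)

/-- any Sylow 2-subgroup of `Perm (Fin (2 ^ n))` is isomorphic to `W n` -/
noncomputable def sylowIso (n : ℕ) (Q : Sylow 2 (Equiv.Perm (Fin (2 ^ n)))) :
    W n ≃* ↥(Q : Subgroup (Equiv.Perm (Fin (2 ^ n)))) := by
  haveI : Fact (Nat.Prime 2) := ⟨Nat.prime_two⟩
  refine MulEquiv.trans (MonoidHom.ofInjective (permW_injective n)) ?_
  have : ((sylowW n : Subgroup (Equiv.Perm (Fin (2 ^ n))))) = (permW n).range :=
    sylowW_coe n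
  refine MulEquiv.trans (MulEquiv.subgroupCongr this.symm) ?_
  exact Sylow.equiv (sylowW n) Q

/-- identification of `hcc` with the counts in the abstract group `W n` -/
lemma hcc_eq (n : ℕ) (k : ℤ) (hk : 0 ≤ k) :
    hcc 2 n k = cnt (W n) (2 ^ k.toNat) := by
  rw [hcc, dif_pos ⟨Nat.prime_two, hk⟩]
  haveI : Fact (Nat.Prime 2) := ⟨Nat.prime_two⟩
  exact (cnt_iso (sylowIso n (Classical.arbitrary _)) (2 ^ k.toNat)).symm

end STW

namespace STW

lemma main_ineqs (n : ℕ) (hn : 2 ≤ n) :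
    hcc 2 n ((n : ℤ) - 2) ≤ hcc 2 n n ∧
    hcc 2 n n ≤ hcc 2 n ((n : ℤ) - 2) + 2 * hcc 2 (n - 1) ((n : ℤ) - 1) ∧
    n + 1 ≤ hcc 2 n n ∧
    (hcc 2 n n - hcc 2 n ((n : ℤ) - 2)) * n ≤ 4 * hcc 2 n n := by
  obtain ⟨m, rfl⟩ : ∃ m, n = m + 1 := ⟨n - 1, by omega⟩
  have hm : 1 ≤ m := by omega
  set n := m + 1 with hn'
  -- identify the three hcc values
  have hA : hcc 2 n n = kcl (W n) := by
    rw [hcc_eq n n (by positivity)]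
    apply cnt_eq_kcl
    intro x
    have h1 : ((n : ℤ)).toNat = n := by omega
    rw [h1]
    exact Nat.le_of_dvd (by positivity) (orderOf_dvd_W n x)
  have hB : hcc 2 n ((n : ℤ) - 2) = cnt (W n) (2 ^ (n - 2)) := by
    rw [hcc_eq n ((n : ℤ) - 2) (by omega)]
    have h1 : ((n : ℤ) - 2).toNat = n - 2 := by omega
    rw [h1]
  have hC : hcc 2 (n - 1) ((n : ℤ) - 1) = kcl (W m) := by
    have h0 : n - 1 = m := by omega
    have h1 : ((n : ℤ) - 1).toNat = m := by omega
    rw [h0, hcc_eq m ((n : ℤ) - 1) (by omega), h1]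
    apply cnt_eq_kcl
    intro x
    exact Nat.le_of_dvd (by positivity) (orderOf_dvd_W m x)
  -- the partition identity
  have hpart := cnt_add_compl (H := W n) (2 ^ (n - 2))
  set big := Nat.card {c : ConjClasses (W n) //
    ∃ g, ConjClasses.mk g = c ∧ 2 ^ (n - 2) < orderOf g} with hbig
  -- the key bound
  have hbb : big ≤ 2 * kcl (W m) := by
    have := big_bound m hm
    exact this
  have hkcl : n + 1 ≤ kcl (W n) := kcl_lb n
  have hkclm : m + 1 ≤ kcl (W m) := kcl_lb m
  have hsq : kcl (W m) * (kcl (W m) + 1) ≤ 2 * kcl (W n) := kcl_sq m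
  refine ⟨?_, ?_, ?_, ?_⟩
  · rw [hA, hB]; omega
  · rw [hA, hB, hC]; omega
  · rw [hA]; omega
  · rw [hA, hB]
    have h1 : kcl (W n) - cnt (W n) (2 ^ (n - 2)) = big := by omega
    rw [h1]
    calc big * n ≤ (2 * kcl (W m)) * (kcl (W m) + 1) := by
          apply Nat.mul_le_mul hbb
          omega
      _ = 2 * (kcl (W m) * (kcl (W m) + 1)) := by ring
      _ ≤ 2 * (2 * kcl (W n)) := by omega
      _ = 4 * kcl (W n) := by ring

theorem h_two_below_top_ratio' (_ : (2 : ℕ).Prime) :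
    (∃ C : ℝ, 0 < C ∧ ∀ n : ℕ, 2 ≤ n →
        (hcc 2 n n : ℝ) - hcc 2 n ((n : ℤ) - 2) ≤ C * hcc 2 (n - 1) ((n : ℤ) - 1)) ∧
      Filter.Tendsto (fun n : ℕ => (hcc 2 n ((n : ℤ) - 2) : ℝ) / hcc 2 n n)
        Filter.atTop (nhds 1) := by
  constructor
  · refine ⟨2, by norm_num, ?_⟩
    intro n hn
    obtain ⟨h1, h2, h3, h4⟩ := main_ineqs n hn
    have := (Nat.cast_le (α := ℝ)).mpr h2
    push_cast at this
    linarith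
  · have hlo : Filter.Tendsto (fun n : ℕ => 1 - 4 / (n : ℝ)) Filter.atTop (nhds 1) := by
      have := (tendsto_const_nhds (x := (1:ℝ)) (f := Filter.atTop (α := ℕ))).sub
        (tendsto_const_div_atTop_nhds_zero_nat 4)
      simpa using this
    refine tendsto_of_tendsto_of_tendsto_of_le_of_le' hlo tendsto_const_nhds ?_ ?_
    · -- lower bound eventually
      filter_upwards [Filter.eventually_ge_atTop 2] with n hn
      obtain ⟨h1, h2, h3, h4⟩ := main_ineqs n hn
      have hkpos : (0:ℝ) < hcc 2 n n := by
        have : (1:ℕ) ≤ hcc 2 n n := by omega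
        exact_mod_cast Nat.lt_of_lt_of_le Nat.zero_lt_one this
      have hnpos : (0:ℝ) < (n:ℝ) := by
        have : (0:ℕ) < n := by omega
        exact_mod_cast this
      have h4' : ((hcc 2 n n : ℝ) - (hcc 2 n ((n : ℤ) - 2) : ℝ)) * (n : ℝ)
          ≤ 4 * (hcc 2 n n : ℝ) := by
        have hc := (Nat.cast_le (α := ℝ)).mpr h4
        rw [Nat.cast_mul, Nat.cast_mul, Nat.cast_sub h1] at hc
        exact_mod_cast hc
      have key : (1 - 4 / (n : ℝ)) * (hcc 2 n n : ℝ) ≤ (hcc 2 n ((n : ℤ) - 2) : ℝ) := by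
        rw [sub_mul, one_mul, div_mul_eq_mul_div, sub_le_comm, le_div_iff₀ hnpos]
        exact h4'
      exact (le_div_iff₀ hkpos).mpr key
    · -- upper bound eventually
      filter_upwards [Filter.eventually_ge_atTop 2] with n hn
      obtain ⟨h1, _, h3, _⟩ := main_ineqs n hn
      have hkpos : (0:ℝ) < hcc 2 n n := by
        have : (1:ℕ) ≤ hcc 2 n n := by omega
        exact_mod_cast Nat.lt_of_lt_of_le Nat.zero_lt_one this
      rw [div_le_one hkpos]
      exact_mod_cast h1

end STW


/-- For `p = 2`: `h_n(n) − h_n(n−2) ≪ h_{n−1}(n−1)`, and hence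
`h_n(n−2)/h_n(n) → 1` as `n → ∞`. -/
theorem h_two_below_top_ratio (_ : (2 : ℕ).Prime) :
    (∃ C : ℝ, 0 < C ∧ ∀ n : ℕ, 2 ≤ n →
        (hcc 2 n n : ℝ) - hcc 2 n ((n : ℤ) - 2) ≤ C * hcc 2 (n - 1) ((n : ℤ) - 1)) ∧
      Filter.Tendsto (fun n : ℕ => (hcc 2 n ((n : ℤ) - 2) : ℝ) / hcc 2 n n)
        Filter.atTop (nhds 1) := by
  exact STW.h_two_below_top_ratio' Nat.prime_two
end

section
/- Let p = 2. There exists a constant C > 0 such that for all n ≥ 2, one has |h_n(n) − (1/2)·h_{n−1}(n−1)^2| ≤ C · h_{n−1}(n−1). -/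
open Equiv Function Multiplicative

namespace HccAux

abbrev C2 := Multiplicative (ZMod 2)

lemma zmod2_cases : ∀ x : ZMod 2, x = 0 ∨ x = 1 := by decide

lemma c2_cases : ∀ s : C2, s = 1 ∨ s = ofAdd 1 := by decide

lemma zmod2_add_self (x : ZMod 2) : x + x = 0 := by revert x; decide

variable (G : Type*) [Group G]

/-- the swap automorphism -/
def tau : MulAut (G × G) := MulEquiv.prodComm

@[simp] lemma tau_apply (p : G × G) : tau G p = (p.2, p.1) := rfl

lemma tau_sq : tau G * tau G = 1 := by
  ext x <;> simp [MulAut.mul_apply]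

def phi : C2 →* MulAut (G × G) :=
  MonoidHom.mk' (fun s => tau G ^ (s.toAdd.val)) (by
    intro a b
    rcases c2_cases a with ha | ha <;> rcases c2_cases b with hb | hb <;>
      subst ha <;> subst hb <;>
      simp only [one_mul, mul_one, toAdd_one, toAdd_mul, toAdd_ofAdd] <;>
      norm_num
    rw [show ZMod.val (2 : ZMod 2) = 0 by decide, show ZMod.val (1 : ZMod 2) = 1 by decide]
    simp [tau_sq])

lemma phi_one : phi G 1 = 1 := map_one _

lemma phi_sigma : phi G (ofAdd 1) = tau G := by
  show tau G ^ _ = _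
  rw [show ZMod.val (Multiplicative.toAdd (ofAdd (1:ZMod 2))) = 1 by decide]
  simp

/-- the wreath product `G ≀ C2` -/
abbrev W := SemidirectProduct (G × G) C2 (phi G)

/-- selector -/
def sel (p : G × G) (j : ZMod 2) : G := if j = 0 then p.1 else p.2

@[simp] lemma sel_zero (p : G × G) : sel G p 0 = p.1 := rfl
@[simp] lemma sel_one (p : G × G) : sel G p 1 = p.2 := by simp [sel]

lemma sel_mul (p q : G × G) (j : ZMod 2) : sel G (p * q) j = sel G p j * sel G q j := by
  rcases zmod2_cases j with h | h <;> subst h <;> simp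

lemma sel_phi (s : C2) (p : G × G) (j : ZMod 2) :
    sel G (phi G s p) j = sel G p (j + s.toAdd) := by
  rcases c2_cases s with h | h <;> subst h
  · simp [phi_one]
  · rw [phi_sigma]
    rcases zmod2_cases j with h | h <;> subst h <;> simp [tau_apply]
    · rw [show ((1:ZMod 2) + 1) = 0 by decide]; simp

variable {α : Type*} [MulAction G α]

/-- action of an element of the wreath product on `α × ZMod 2` -/
def wact (w : W G) : Equiv.Perm (α × ZMod 2) where
  toFun x := (sel G w.left (x.2 + w.right.toAdd) • x.1, x.2 + w.right.toAdd)
  invFun x := ((sel G w.left x.2)⁻¹ • x.1, x.2 - w.right.toAdd)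
  left_inv x := by simp
  right_inv x := by simp

lemma wact_apply (w : W G) (x : α × ZMod 2) :
    wact G w x = (sel G w.left (x.2 + w.right.toAdd) • x.1, x.2 + w.right.toAdd) := rfl

/-- the wreath product as permutations of `α × ZMod 2` -/
def wperm : W G →* Equiv.Perm (α × ZMod 2) :=
  MonoidHom.mk' (wact G) (by
    intro w1 w2
    ext x
    · show sel G ((w1*w2).left) (x.2 + (w1*w2).right.toAdd) • x.1 =
        sel G w1.left ((x.2 + w2.right.toAdd) + w1.right.toAdd) •
          (sel G w2.left (x.2 + w2.right.toAdd) • x.1)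
      rw [SemidirectProduct.mul_left, SemidirectProduct.mul_right, toAdd_mul,
        sel_mul, sel_phi, mul_smul]
      rw [show x.2 + (w1.right.toAdd + w2.right.toAdd) = (x.2 + w2.right.toAdd) + w1.right.toAdd
          by abel]
      rw [show x.2 + w2.right.toAdd + w1.right.toAdd + w1.right.toAdd
          = x.2 + w2.right.toAdd + (w1.right.toAdd + w1.right.toAdd) by abel,
        zmod2_add_self, add_zero]
    · show x.2 + (w1*w2).right.toAdd = (x.2 + w2.right.toAdd) + w1.right.toAdd
      rw [SemidirectProduct.mul_right, toAdd_mul]; abel)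

lemma wperm_apply (w : W G) (x : α × ZMod 2) :
    wperm G w x = (sel G w.left (x.2 + w.right.toAdd) • x.1, x.2 + w.right.toAdd) := rfl

lemma wperm_injective [Nonempty α] [FaithfulSMul G α] :
    Function.Injective (wperm G (α := α)) := by
  rw [injective_iff_map_eq_one]
  intro w hw
  obtain ⟨x0⟩ := ‹Nonempty α›
  have h2 : ∀ x : α, ∀ i : ZMod 2, (wperm G w (x, i)).2 = i := fun x i => by rw [hw]; rfl
  have hs : w.right = 1 := by
    have := h2 x0 0
    rw [wperm_apply] at this
    simp only [zero_add] at this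
    rcases c2_cases w.right with h | h
    · exact h
    · exfalso; rw [h] at this; exact absurd this (by decide)
  have h1 : ∀ x : α, ∀ i : ZMod 2, sel G w.left i • x = x := by
    intro x i
    have h := congrArg Prod.fst (congrArg (fun (p : Equiv.Perm (α × ZMod 2)) => p (x, i)) hw)
    simp only [wperm_apply, Equiv.Perm.coe_one, id_eq] at h
    simpa [hs] using h
  have ha : w.left.1 = 1 := by
    apply eq_of_smul_eq_smul (α := α)
    intro x
    simpa using h1 x 0
  have hb : w.left.2 = 1 := by
    apply eq_of_smul_eq_smul (α := α)
    intro x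
    simpa using h1 x 1
  ext
  · exact congrArg Prod.fst (show w.left = 1 from Prod.ext ha hb)
  · exact congrArg Prod.snd (show w.left = 1 from Prod.ext ha hb)
  · exact hs

/-- underlying equiv of the semidirect product with the product type -/
def wEquivProd : W G ≃ (G × G) × C2 where
  toFun w := (w.left, w.right)
  invFun p := ⟨p.1, p.2⟩
  left_inv w := rfl
  right_inv p := rfl

lemma card_W [Finite G] : Nat.card (W G) = 2 * (Nat.card G) ^ 2 := by
  rw [Nat.card_congr (wEquivProd G), Nat.card_prod, Nat.card_prod]
  have : Nat.card C2 = 2 := by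
    rw [Nat.card_eq_fintype_card]; rfl
  rw [this]; ring

section Count

local notation "σw" => (ofAdd (1 : ZMod 2) : C2)

lemma sigma_ne_one : (σw : C2) ≠ 1 := by decide

lemma sigma_inv : (σw : C2)⁻¹ = σw := by decide

variable {G}

lemma conj0_0 (x y a b : G) :
    (⟨(x,y),1⟩ : W G) * ⟨(a,b),1⟩ * (⟨(x,y),1⟩ : W G)⁻¹
      = (⟨(x*a*x⁻¹, y*b*y⁻¹),1⟩ : W G) := by
  ext
  · simp [SemidirectProduct.mul_left, SemidirectProduct.mul_right,
      SemidirectProduct.inv_left, SemidirectProduct.inv_right, phi_one, phi_sigma,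
      sigma_inv, mul_assoc]
  · simp [SemidirectProduct.mul_left, SemidirectProduct.mul_right,
      SemidirectProduct.inv_left, SemidirectProduct.inv_right, phi_one, phi_sigma,
      sigma_inv, mul_assoc]
  · show (1:C2) * 1 * (1:C2)⁻¹ = 1
    decide

lemma conj0_1 (x y a b : G) :
    (⟨(x,y),1⟩ : W G) * ⟨(a,b),σw⟩ * (⟨(x,y),1⟩ : W G)⁻¹
      = (⟨(x*a*y⁻¹, y*b*x⁻¹),σw⟩ : W G) := by
  ext
  · simp [SemidirectProduct.mul_left, SemidirectProduct.mul_right,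
      SemidirectProduct.inv_left, SemidirectProduct.inv_right, phi_one, phi_sigma,
      sigma_inv, mul_assoc]
  · simp [SemidirectProduct.mul_left, SemidirectProduct.mul_right,
      SemidirectProduct.inv_left, SemidirectProduct.inv_right, phi_one, phi_sigma,
      sigma_inv, mul_assoc]
  · show (1:C2) * σw * (1:C2)⁻¹ = σw
    decide

lemma conj1_0 (x y a b : G) :
    (⟨(x,y),σw⟩ : W G) * ⟨(a,b),1⟩ * (⟨(x,y),σw⟩ : W G)⁻¹
      = (⟨(x*b*x⁻¹, y*a*y⁻¹),1⟩ : W G) := by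
  ext
  · simp [SemidirectProduct.mul_left, SemidirectProduct.mul_right,
      SemidirectProduct.inv_left, SemidirectProduct.inv_right, phi_one, phi_sigma,
      sigma_inv, mul_assoc]
  · simp [SemidirectProduct.mul_left, SemidirectProduct.mul_right,
      SemidirectProduct.inv_left, SemidirectProduct.inv_right, phi_one, phi_sigma,
      sigma_inv, mul_assoc]
  · show (σw:C2) * 1 * (σw:C2)⁻¹ = 1
    decide

lemma conj1_1 (x y a b : G) :
    (⟨(x,y),σw⟩ : W G) * ⟨(a,b),σw⟩ * (⟨(x,y),σw⟩ : W G)⁻¹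
      = (⟨(x*b*y⁻¹, y*a*x⁻¹),σw⟩ : W G) := by
  have hss : (σw : C2) * σw = 1 := by decide
  ext
  · simp [SemidirectProduct.mul_left, SemidirectProduct.mul_right,
      SemidirectProduct.inv_left, SemidirectProduct.inv_right, phi_one, phi_sigma,
      sigma_inv, hss, mul_assoc]
  · simp [SemidirectProduct.mul_left, SemidirectProduct.mul_right,
      SemidirectProduct.inv_left, SemidirectProduct.inv_right, phi_one, phi_sigma,
      sigma_inv, hss, mul_assoc]
  · show (σw:C2) * σw * (σw:C2)⁻¹ = σw
    decide

variable (G)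

/-- class invariant of an element of the wreath product -/
def fcc (w : W G) : Sym2 (ConjClasses G) ⊕ ConjClasses G :=
  if w.right = 1 then
    Sum.inl s(ConjClasses.mk w.left.1, ConjClasses.mk w.left.2)
  else Sum.inr (ConjClasses.mk (w.left.1 * w.left.2))

variable {G}

lemma fcc_mk0 (a b : G) : fcc G (⟨(a,b),1⟩ : W G) = Sum.inl s(ConjClasses.mk a, ConjClasses.mk b) := rfl

lemma fcc_mk1 (a b : G) : fcc G (⟨(a,b),σw⟩ : W G) = Sum.inr (ConjClasses.mk (a * b)) := by
  simp [fcc, sigma_ne_one]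

lemma fcc_conj (u w : W G) : fcc G (u * w * u⁻¹) = fcc G w := by
  obtain ⟨⟨x, y⟩, su⟩ := u
  obtain ⟨⟨a, b⟩, s⟩ := w
  rcases c2_cases su with hu | hu <;> subst hu <;> rcases c2_cases s with hs | hs <;> subst hs
  · rw [conj0_0, fcc_mk0, fcc_mk0]
    congr 1
    have h1 : ConjClasses.mk (x*a*x⁻¹) = ConjClasses.mk a :=
      (ConjClasses.mk_eq_mk_iff_isConj).mpr (isConj_iff.mpr ⟨x⁻¹, by group⟩)
    have h2 : ConjClasses.mk (y*b*y⁻¹) = ConjClasses.mk b :=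
      (ConjClasses.mk_eq_mk_iff_isConj).mpr (isConj_iff.mpr ⟨y⁻¹, by group⟩)
    rw [h1, h2]
  · rw [conj0_1, fcc_mk1, fcc_mk1]
    congr 1
    exact (ConjClasses.mk_eq_mk_iff_isConj).mpr (isConj_iff.mpr ⟨x⁻¹, by group⟩)
  · rw [conj1_0, fcc_mk0, fcc_mk0]
    congr 1
    have h1 : ConjClasses.mk (x*b*x⁻¹) = ConjClasses.mk b :=
      (ConjClasses.mk_eq_mk_iff_isConj).mpr (isConj_iff.mpr ⟨x⁻¹, by group⟩)
    have h2 : ConjClasses.mk (y*a*y⁻¹) = ConjClasses.mk a :=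
      (ConjClasses.mk_eq_mk_iff_isConj).mpr (isConj_iff.mpr ⟨y⁻¹, by group⟩)
    rw [h1, h2]
    exact Sym2.eq_swap
  · rw [conj1_1, fcc_mk1, fcc_mk1]
    congr 1
    exact (ConjClasses.mk_eq_mk_iff_isConj).mpr (isConj_iff.mpr ⟨a * x⁻¹, by group⟩)

variable (G)

/-- the induced map on conjugacy classes -/
def Fcc : ConjClasses (W G) → Sym2 (ConjClasses G) ⊕ ConjClasses G :=
  Quotient.lift (fcc G) (by
    intro u w (h : IsConj u w)
    obtain ⟨z, hz⟩ := isConj_iff.mp h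
    rw [← hz, fcc_conj])

lemma Fcc_mk (w : W G) : Fcc G (ConjClasses.mk w) = fcc G w := rfl

lemma Fcc_bijective : Function.Bijective (Fcc G) := by
  constructor
  · intro c1 c2 h
    obtain ⟨u, rfl⟩ := ConjClasses.mk_surjective c1
    obtain ⟨w, rfl⟩ := ConjClasses.mk_surjective c2
    obtain ⟨⟨a, b⟩, s⟩ := u
    obtain ⟨⟨a', b'⟩, s'⟩ := w
    rw [ConjClasses.mk_eq_mk_iff_isConj]
    rcases c2_cases s with hs | hs <;> subst hs <;>
      rcases c2_cases s' with hs' | hs' <;> subst hs'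
    · rw [Fcc_mk, Fcc_mk, fcc_mk0, fcc_mk0] at h
      have h2 := Sym2.eq_iff.mp (Sum.inl_injective h)
      rcases h2 with ⟨h1, h2⟩ | ⟨h1, h2⟩
      · obtain ⟨x, hx⟩ := isConj_iff.mp (ConjClasses.mk_eq_mk_iff_isConj.mp h1)
        obtain ⟨y, hy⟩ := isConj_iff.mp (ConjClasses.mk_eq_mk_iff_isConj.mp h2)
        exact isConj_iff.mpr ⟨⟨(x,y),1⟩, by rw [conj0_0, hx, hy]⟩
      · obtain ⟨y, hy⟩ := isConj_iff.mp (ConjClasses.mk_eq_mk_iff_isConj.mp h1)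
        obtain ⟨x, hx⟩ := isConj_iff.mp (ConjClasses.mk_eq_mk_iff_isConj.mp h2)
        exact isConj_iff.mpr ⟨⟨(x,y),σw⟩, by rw [conj1_0, hx, hy]⟩
    · rw [Fcc_mk, Fcc_mk, fcc_mk0, fcc_mk1] at h
      exact absurd h (by simp)
    · rw [Fcc_mk, Fcc_mk, fcc_mk1, fcc_mk0] at h
      exact absurd h (by simp)
    · rw [Fcc_mk, Fcc_mk, fcc_mk1, fcc_mk1] at h
      obtain ⟨z, hz⟩ := isConj_iff.mp (ConjClasses.mk_eq_mk_iff_isConj.mp (Sum.inr_injective h))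
      refine isConj_iff.mpr ⟨⟨(z, a'⁻¹ * z * a),1⟩, ?_⟩
      rw [conj0_1]
      have hb' : a'⁻¹ * z * a * b * z⁻¹ = b' := by
        have h1 : a'⁻¹ * (z * (a * b) * z⁻¹) = b' := by rw [hz]; group
        rw [← h1]; group
      have ha' : z * a * (a'⁻¹ * z * a)⁻¹ = a' := by group
      rw [ha', hb']
  · intro t
    rcases t with q | c
    · induction q using Sym2.ind with
      | _ u v =>
        obtain ⟨a, rfl⟩ := ConjClasses.mk_surjective u
        obtain ⟨b, rfl⟩ := ConjClasses.mk_surjective v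
        exact ⟨ConjClasses.mk ⟨(a,b),1⟩, by rw [Fcc_mk, fcc_mk0]⟩
    · obtain ⟨a, rfl⟩ := ConjClasses.mk_surjective c
      exact ⟨ConjClasses.mk ⟨(a,1),σw⟩, by rw [Fcc_mk, fcc_mk1, mul_one]⟩

instance [Finite G] : Finite (W G) := Finite.of_equiv _ (wEquivProd G).symm

lemma two_mul_card_conjClasses_W [Finite G] :
    2 * Nat.card (ConjClasses (W G)) =
      Nat.card (ConjClasses G) ^ 2 + 3 * Nat.card (ConjClasses G) := by
  classical
  set k := Nat.card (ConjClasses G) with hk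
  haveI : Fintype (ConjClasses G) := Fintype.ofFinite _
  have hcard : Nat.card (ConjClasses (W G)) = Nat.card (Sym2 (ConjClasses G)) + k := by
    rw [Nat.card_congr (Equiv.ofBijective _ (Fcc_bijective G)), Nat.card_sum]
  have hsym : Nat.card (Sym2 (ConjClasses G)) = (k + 1).choose 2 := by
    rw [Nat.card_eq_fintype_card, Sym2.card, hk, Nat.card_eq_fintype_card]
  have h2 : 2 ∣ (k + 1) * k := by
    rw [mul_comm]
    exact (Nat.even_mul_succ_self k).two_dvd
  have hc : (k + 1).choose 2 = (k + 1) * k / 2 := by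
    rw [Nat.choose_two_right]
    simp
  rw [hcard, hsym, hc, Nat.mul_add, Nat.mul_div_cancel' h2]
  ring

end Count

section Sylow2

/-- a `MulEquiv` version of `Equiv.permCongr` -/
def permCongrMul {α β : Type*} (e : α ≃ β) : Equiv.Perm α ≃* Equiv.Perm β :=
  { Equiv.permCongr e with
    map_mul' := fun f g => by
      ext x
      simp [Equiv.permCongr_apply, Equiv.Perm.mul_apply] }

lemma permCongrMul_injective {α β : Type*} (e : α ≃ β) :
    Function.Injective (permCongrMul e) := (permCongrMul e).injective

lemma padic_fact (m : ℕ) : padicValNat 2 (Nat.factorial (2 ^ m)) = 2 ^ m - 1 := by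
  induction m with
  | zero => simp
  | succ m ih =>
    have h : (2:ℕ) ^ (m+1) = 2 * 2 ^ m := by rw [pow_succ]; ring
    rw [h, padicValNat_factorial_mul, ih]
    have h1 : 1 ≤ (2:ℕ) ^ m := Nat.one_le_two_pow
    omega

lemma card_perm_pow (M : ℕ) :
    Nat.card (Equiv.Perm (Fin M)) = Nat.factorial M := by
  rw [Nat.card_eq_fintype_card, Fintype.card_perm, Fintype.card_fin]

lemma factorization_card_perm (m : ℕ) :
    (Nat.card (Equiv.Perm (Fin (2 ^ m)))).factorization 2 = 2 ^ m - 1 := by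
  rw [card_perm_pow, Nat.factorization_def _ Nat.prime_two, padic_fact]

lemma card_sylow_perm (m : ℕ) (P : Sylow 2 (Equiv.Perm (Fin (2 ^ m)))) :
    Nat.card P = 2 ^ (2 ^ m - 1) := by
  rw [P.card_eq_multiplicity, factorization_card_perm]

lemma orderOf_le_of_sylow (m : ℕ) (P : Sylow 2 (Equiv.Perm (Fin (2 ^ m))))
    (g : ↥(P : Subgroup (Equiv.Perm (Fin (2 ^ m))))) : orderOf g ≤ 2 ^ m := by
  have hco : orderOf ((P : Subgroup (Equiv.Perm (Fin (2 ^ m)))).subtype g) = orderOf g :=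
    orderOf_injective _ (P : Subgroup (Equiv.Perm (Fin (2 ^ m)))).subtype_injective g
  set σ : Equiv.Perm (Fin (2 ^ m)) := (P : Subgroup (Equiv.Perm (Fin (2 ^ m)))).subtype g with hσ
  have hdvd : orderOf g ∣ 2 ^ (2 ^ m - 1) := by
    rw [← card_sylow_perm m P]
    exact orderOf_dvd_natCard g
  have hσdvd : orderOf σ ∣ 2 ^ m := by
    rw [← Equiv.Perm.lcm_cycleType]
    rw [Multiset.lcm_dvd]
    intro l hl
    have hl1 : l ∣ orderOf σ := Equiv.Perm.dvd_of_mem_cycleType hl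
    have hl2 : l ∣ 2 ^ (2 ^ m - 1) := by
      rw [hco] at hl1
      exact hl1.trans hdvd
    obtain ⟨b, _, rfl⟩ := (Nat.dvd_prime_pow Nat.prime_two).mp hl2
    have hle : 2 ^ b ≤ 2 ^ m := by
      calc 2 ^ b ≤ σ.support.card := Equiv.Perm.le_card_support_of_mem_cycleType hl
        _ ≤ Fintype.card (Fin (2 ^ m)) := Finset.card_le_univ _
        _ = 2 ^ m := Fintype.card_fin _
    exact pow_dvd_pow 2 ((Nat.pow_le_pow_iff_right (by norm_num)).mp hle)
  rw [← hco]
  exact Nat.le_of_dvd (by positivity) hσdvd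

end Sylow2

section Main

/-- conjugacy classes transfer along a `MulEquiv` -/
def conjClassesCongr {G H : Type*} [Group G] [Group H] (e : G ≃* H) :
    ConjClasses G ≃ ConjClasses H :=
  Quotient.congr e.toEquiv (by
    intro a b
    show IsConj a b ↔ IsConj (e a) (e b)
    constructor
    · exact fun h => e.toMonoidHom.map_isConj h
    · intro h
      have h2 := e.symm.toMonoidHom.map_isConj h
      simpa using h2)

instance faithful_subgroup_perm {β : Type*} (H : Subgroup (Equiv.Perm β)) :
    FaithfulSMul H β :=
  ⟨fun {g1 g2} h => Subtype.ext (Equiv.ext (fun x => h x))⟩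

/-- chosen Sylow 2-subgroup at level `m` -/
noncomputable def PSm (m : ℕ) : Sylow 2 (Equiv.Perm (Fin (2 ^ m))) :=
  Classical.arbitrary _

variable (m : ℕ)

lemma hcc_eval : hcc 2 m (m : ℤ) =
    Nat.card (ConjClasses ↥((PSm m) : Subgroup (Equiv.Perm (Fin (2 ^ m))))) := by
  have hcond : (2:ℕ).Prime ∧ (0:ℤ) ≤ (m:ℤ) := ⟨Nat.prime_two, by positivity⟩
  rw [hcc, dif_pos hcond]
  refine Nat.card_congr (Equiv.subtypeUnivEquiv ?_)
  intro c
  obtain ⟨g, rfl⟩ := ConjClasses.mk_surjective c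
  refine ⟨g, rfl, ?_⟩
  have := orderOf_le_of_sylow m (PSm m) g
  simp only [Int.toNat_natCast]; exact this

/-- the equiv between `Fin (2^m) × ZMod 2` and `Fin (2^(m+1))` -/
noncomputable def pointEquiv : (Fin (2 ^ m) × ZMod 2) ≃ Fin (2 ^ (m + 1)) :=
  (Equiv.prodCongr (Equiv.refl (Fin (2 ^ m)))
      (Fintype.equivFinOfCardEq (by simp) : ZMod 2 ≃ Fin 2)).trans
    (finProdFinEquiv.trans (finCongr (by rw [pow_succ])))

/-- the embedding of the wreath product into the big permutation group -/
noncomputable def Psi :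
    W ↥((PSm m) : Subgroup (Equiv.Perm (Fin (2 ^ m)))) →* Equiv.Perm (Fin (2 ^ (m + 1))) :=
  (permCongrMul (pointEquiv m)).toMonoidHom.comp
    (wperm ↥((PSm m) : Subgroup (Equiv.Perm (Fin (2 ^ m)))) (α := Fin (2 ^ m)))

lemma Psi_injective : Function.Injective (Psi m) :=
  (permCongrMul (pointEquiv m)).injective.comp (wperm_injective _)

lemma card_Gm : Nat.card ↥((PSm m) : Subgroup (Equiv.Perm (Fin (2 ^ m)))) = 2 ^ (2 ^ m - 1) :=
  card_sylow_perm m _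

lemma card_W_Gm :
    Nat.card (W ↥((PSm m) : Subgroup (Equiv.Perm (Fin (2 ^ m))))) = 2 ^ (2 ^ (m + 1) - 1) := by
  rw [card_W, card_Gm]
  have h1 : 1 ≤ (2:ℕ) ^ m := Nat.one_le_two_pow
  have h2 : (2:ℕ) ^ (m+1) = 2 ^ m * 2 := pow_succ 2 m
  have h3 : 2 * ((2:ℕ) ^ (2 ^ m - 1)) ^ 2 = 2 ^ (2 * (2 ^ m - 1) + 1) := by
    rw [← pow_mul, pow_succ]; ring
  rw [h3]
  congr 1
  omega

lemma card_Psi_range : Nat.card (Psi m).range =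
    2 ^ (Nat.card (Equiv.Perm (Fin (2 ^ (m + 1))))).factorization 2 := by
  rw [factorization_card_perm (m+1), ← card_W_Gm m]
  exact (Nat.card_congr (MonoidHom.ofInjective (Psi_injective m)).toEquiv).symm

/-- the range of `Psi` as a Sylow subgroup -/
noncomputable def QSyl : Sylow 2 (Equiv.Perm (Fin (2 ^ (m + 1)))) :=
  Sylow.ofCard (Psi m).range (card_Psi_range m)

/-- the chosen Sylow subgroup at level `m+1` is isomorphic to the wreath product -/
noncomputable def sylowEquivW :
    (↥((PSm (m+1)) : Subgroup (Equiv.Perm (Fin (2 ^ (m + 1)))))) ≃*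
      W ↥((PSm m) : Subgroup (Equiv.Perm (Fin (2 ^ m)))) :=
  ((Sylow.equiv (PSm (m+1)) (QSyl m)).trans
    (MulEquiv.subgroupCongr (Sylow.coe_ofCard _ (card_Psi_range m)))).trans
    (MonoidHom.ofInjective (Psi_injective m)).symm

lemma hcc_recurrence :
    2 * hcc 2 (m + 1) ((m : ℤ) + 1) = (hcc 2 m (m : ℤ)) ^ 2 + 3 * hcc 2 m (m : ℤ) := by
  have h1 : ((m : ℤ) + 1) = ((m + 1 : ℕ) : ℤ) := by push_cast; ring
  rw [h1, hcc_eval (m + 1), hcc_eval m]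
  rw [Nat.card_congr (conjClassesCongr (sylowEquivW m))]
  exact two_mul_card_conjClasses_W _

end Main

end HccAux

/-- For `p = 2`: `h_n(n) = (1/2) h_{n−1}(n−1)^2 + O(h_{n−1}(n−1))`. -/
theorem h_top_square_approx (_ : (2 : ℕ).Prime) :
    ∃ C : ℝ, 0 < C ∧ ∀ n : ℕ, 2 ≤ n →
      |(hcc 2 n n : ℝ) - (1 / 2) * (hcc 2 (n - 1) ((n : ℤ) - 1) : ℝ) ^ 2| ≤
        C * hcc 2 (n - 1) ((n : ℤ) - 1) := by
  refine ⟨2, by norm_num, ?_⟩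
  intro n hn
  have hn1 : n = (n - 1) + 1 := by omega
  have hz : ((n : ℤ) - 1) = ((n - 1 : ℕ) : ℤ) := by
    have : (1:ℤ) ≤ (n:ℤ) := by exact_mod_cast Nat.one_le_of_lt hn
    push_cast [Nat.cast_sub (by omega : 1 ≤ n)]
    ring
  rw [hz]
  set m : ℕ := n - 1 with hm
  set K : ℕ := hcc 2 m (m : ℤ) with hK
  have h2N : 2 * hcc 2 n (n : ℤ) = K ^ 2 + 3 * K := by
    have hcast : (((m + 1 : ℕ)) : ℤ) = (m : ℤ) + 1 := by push_cast; ring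
    rw [show n = m + 1 from hn1, hcast]
    exact HccAux.hcc_recurrence m
  have hreal : (2 : ℝ) * (hcc 2 n (n : ℤ) : ℝ) = (K : ℝ) ^ 2 + 3 * K := by
    exact_mod_cast congrArg (Nat.cast : ℕ → ℝ) h2N
  have hKnn : (0:ℝ) ≤ (K:ℝ) := Nat.cast_nonneg K
  have habs : ((hcc 2 n (n : ℤ) : ℝ)) - (1/2) * (K:ℝ)^2 = (3/2) * K := by linarith
  rw [habs, abs_of_nonneg (by linarith)]
  linarith
end
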